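/- Suppose a linear impulsive transition operator satisfies the exponential estimate ‖Z(t,s)‖ ≤ N e^{−ω(t−s)} for t ≥ s with N, ω > 0, and NL(2/ω + e^ω/(1−e^{−ω})) < 1; then the map on bounded functions defined by Tz(t) = ∫_{−∞}^t Z(t,s) f(z(s)) ds + Σ_{ζ_i < t} Z(t,ζ_i) W(z(ζ_i)), where f, W are L-Lipschitz and bounded by M₀, and the impulse moments satisfy i ≤ ζ_i < i+1, is a contraction on the space of bounded functions with sup-norm, with contraction constant NL(1/ω + e^ω/(1−e^{−ω})). -/

import Mathlib

open MeasureTheory Real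

lemma integrableOn_exp_decay (ω t : ℝ) (hω : 0 < ω) :
    IntegrableOn (fun s => Real.exp (-ω * (t - s))) (Set.Iic t) := by
  have h1 : IntegrableOn (fun x : ℝ => Real.exp (ω * x)) (Set.Iic t) := by
    rw [← integrable_indicator_iff (measurableSet_Iic (a := t))]
    have h2 := (integrable_comp_mul_left_iff ((Set.Iic (ω * t)).indicator Real.exp) hω.ne').2
      ((integrable_indicator_iff measurableSet_Iic).2 (integrableOn_exp_Iic (ω * t)))
    refine h2.congr (Filter.Eventually.of_forall fun x => ?_)
    show Set.indicator (Set.Iic (ω * t)) Real.exp (ω * x) = Set.indicator (Set.Iic t) (fun x : ℝ => Real.exp (ω * x)) x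
    rw [← Set.indicator_comp_right, show HMul.hMul ω ⁻¹' Set.Iic (ω * t) = Set.Iic t from
      (Set.preimage_const_mul_Iic₀ _ hω).trans (by rw [mul_div_cancel_left₀ _ hω.ne'])]
    rfl
  have h3 := (h1.const_mul (Real.exp (-ω * t)))
  apply h3.congr
  refine Filter.Eventually.of_forall (fun x => ?_)
  show Real.exp (-ω * t) * Real.exp (ω * x) = Real.exp (-ω * (t - x))
  rw [← Real.exp_add]
  ring_nf

lemma integral_exp_decay (ω t : ℝ) (hω : 0 < ω) :
    ∫ s in Set.Iic t, Real.exp (-ω * (t - s)) = 1 / ω := by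
  have key := integral_Iic_of_hasDerivAt_of_tendsto'
    (f := fun x => ω⁻¹ * Real.exp (-ω * (t - x)))
    (f' := fun x => Real.exp (-ω * (t - x))) (a := t) (m := 0)
    ?_ (integrableOn_exp_decay ω t hω) ?_
  · rw [key]; simp [one_div]
  · intro x _
    have h : HasDerivAt (fun x : ℝ => Real.exp (-ω * (t - x))) (Real.exp (-ω * (t - x)) * ω) x := by
      have h1 : HasDerivAt (fun x : ℝ => -ω * (t - x)) ω x := by
        simpa using ((hasDerivAt_id x).const_sub t).const_mul (-ω)
      simpa using h1.exp
    have := h.const_mul ω⁻¹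
    have e : ω⁻¹ * (Real.exp (-(ω * (t - x))) * ω) = Real.exp (-(ω * (t-x))) := by
      field_simp
    simp only [neg_mul] at this ⊢
    rw [e] at this
    exact this
  · have h1 : Filter.Tendsto (fun x : ℝ => -ω * (t - x)) Filter.atBot Filter.atBot := by
      have : Filter.Tendsto (fun x : ℝ => ω * x - ω * t) Filter.atBot Filter.atBot :=
        (Filter.tendsto_atBot_add_const_right _ (-(ω * t))
          (Filter.Tendsto.const_mul_atBot hω Filter.tendsto_id)).congr (by intro x; simp; ring)
      exact this.congr (by intro x; ring)
    have := (Real.tendsto_exp_atBot.comp h1).const_mul ω⁻¹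
    simpa using this


lemma hasSum_impulse (ω t K : ℝ) (hω : 0 < ω) (hK : 0 ≤ K) :
    ∃ A : ℝ, HasSum (fun i : ℤ => if (i : ℝ) < t then K * Real.exp (-ω * (t - i)) else 0) A ∧
      A ≤ K / (1 - Real.exp (-ω)) := by
  set r : ℝ := Real.exp (-ω) with hr
  have hr0 : 0 ≤ r := (Real.exp_pos _).le
  have hr1 : r < 1 := Real.exp_lt_one_iff.2 (by linarith)
  set c : ℝ := K * Real.exp (-ω * (t - ((⌈t⌉ : ℝ) - 1))) with hc
  set e : ℕ → ℤ := fun k => ⌈t⌉ - 1 - k with he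
  have hinj : Function.Injective e := by
    intro a b hab
    simp only [he] at hab
    omega
  have hsupp : ∀ i : ℤ, i ∉ Set.range e →
      (if (i : ℝ) < t then K * Real.exp (-ω * (t - i)) else 0) = 0 := by
    intro i hi
    rw [if_neg]
    intro hlt
    have h1 : i < ⌈t⌉ := Int.lt_ceil.mpr hlt
    exact hi ⟨(⌈t⌉ - 1 - i).toNat, by simp only [he]; omega⟩
  have hgeom : HasSum (fun k : ℕ => c * r ^ k) (c * (1 - r)⁻¹) :=
    (hasSum_geometric_of_lt_one hr0 hr1).mul_left c
  have hcomp : ((fun i : ℤ => if (i : ℝ) < t then K * Real.exp (-ω * (t - i)) else 0) ∘ e)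
      = fun k : ℕ => c * r ^ k := by
    funext k
    have hlt : ((e k : ℤ) : ℝ) < t := by
      simp only [he]
      push_cast
      have := Int.ceil_lt_add_one t
      have : (0:ℝ) ≤ (k : ℝ) := Nat.cast_nonneg k
      have := Int.ceil_lt_add_one t
      linarith
    simp only [Function.comp_apply, if_pos hlt, he, hc, hr]
    push_cast
    rw [show -ω * (t - ((⌈t⌉ : ℝ) - 1 - k)) = -ω * (t - ((⌈t⌉ : ℝ) - 1)) + (k : ℝ) * (-ω) by ring,
      Real.exp_add, Real.exp_nat_mul]
    rw [if_pos (by have := Int.ceil_lt_add_one t; have : (0:ℝ) ≤ (k : ℝ) := Nat.cast_nonneg k; linarith)]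
    ring
  have hsum : HasSum (fun i : ℤ => if (i : ℝ) < t then K * Real.exp (-ω * (t - i)) else 0)
      (c * (1 - r)⁻¹) := (hinj.hasSum_iff hsupp).1 (hcomp ▸ hgeom)
  refine ⟨c * (1 - r)⁻¹, hsum, ?_⟩
  have h1r : 0 < 1 - r := by linarith
  have hexp1 : Real.exp (-ω * (t - ((⌈t⌉ : ℝ) - 1))) ≤ 1 := by
    rw [Real.exp_le_one_iff]
    have h2 := Int.ceil_lt_add_one t
    nlinarith
  have hcK : c ≤ K := by
    calc c = K * Real.exp (-ω * (t - ((⌈t⌉ : ℝ) - 1))) := rfl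
    _ ≤ K * 1 := by gcongr
    _ = K := mul_one K
  rw [div_eq_mul_inv]
  gcongr

/-- The integral operator of the quasilinear impulsive system is a contraction on
bounded functions, with contraction constant `N*L*(1/ω + e^ω/(1 - e^{-ω}))`. -/
theorem contraction_on_bounded_functions
    {E : Type*} [NormedAddCommGroup E] [NormedSpace ℝ E] [CompleteSpace E]
    [MeasurableSpace E] [BorelSpace E]
    (N ω L M₀ : ℝ) (hN : 0 < N) (hω : 0 < ω) (hL : 0 < L) (hM₀ : 0 < M₀)
    (Z : ℝ → ℝ → (E →L[ℝ] E))
    (hZ : ∀ t s : ℝ, s ≤ t → ‖Z t s‖ ≤ N * exp (-ω * (t - s)))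
    (hsmall : N * L * (2 / ω + exp ω / (1 - exp (-ω))) < 1)
    (f W : E → E)
    (hf : LipschitzWith (Real.toNNReal L) f) (hW : LipschitzWith (Real.toNNReal L) W)
    (hfb : ∀ x, ‖f x‖ ≤ M₀) (hWb : ∀ x, ‖W x‖ ≤ M₀)
    (ζ : ℤ → ℝ) (hζ : ∀ i : ℤ, (i : ℝ) ≤ ζ i ∧ ζ i < i + 1)
    (T : (ℝ → E) → ℝ → E)
    (hT : ∀ z : ℝ → E, ∀ t : ℝ,
      T z t = (∫ s in Set.Iic t, (Z t s) (f (z s))) +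
        ∑' i : ℤ, if ζ i < t then (Z t (ζ i)) (W (z (ζ i))) else 0)
    (z₁ z₂ : ℝ → E) (hm₁ : Measurable z₁) (hm₂ : Measurable z₂)
    (hint₁ : ∀ t : ℝ, IntegrableOn (fun s => (Z t s) (f (z₁ s))) (Set.Iic t))
    (hint₂ : ∀ t : ℝ, IntegrableOn (fun s => (Z t s) (f (z₂ s))) (Set.Iic t))
    (hsum₁ : ∀ t : ℝ, Summable fun i : ℤ => if ζ i < t then (Z t (ζ i)) (W (z₁ (ζ i))) else 0)
    (hsum₂ : ∀ t : ℝ, Summable fun i : ℤ => if ζ i < t then (Z t (ζ i)) (W (z₂ (ζ i))) else 0)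
    (C : ℝ) (hC : 0 ≤ C) (hdiff : ∀ t : ℝ, ‖z₁ t - z₂ t‖ ≤ C) :
    ∀ t : ℝ, ‖T z₁ t - T z₂ t‖ ≤ N * L * (1 / ω + exp ω / (1 - exp (-ω))) * C := by
  intro t
  have hLnn : ((Real.toNNReal L : NNReal) : ℝ) = L := Real.coe_toNNReal L hL.le
  rw [hT z₁ t, hT z₂ t]
  set I₁ := ∫ s in Set.Iic t, (Z t s) (f (z₁ s)) with hI₁
  set I₂ := ∫ s in Set.Iic t, (Z t s) (f (z₂ s)) with hI₂
  set S₁ := ∑' i : ℤ, if ζ i < t then (Z t (ζ i)) (W (z₁ (ζ i))) else 0 with hS₁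
  set S₂ := ∑' i : ℤ, if ζ i < t then (Z t (ζ i)) (W (z₂ (ζ i))) else 0 with hS₂
  -- Integral part
  have keyI : ‖I₁ - I₂‖ ≤ N * L * C * (1 / ω) := by
    rw [hI₁, hI₂, ← integral_sub (hint₁ t) (hint₂ t)]
    have hbnd : ∀ᵐ s ∂(volume.restrict (Set.Iic t)),
        ‖(Z t s) (f (z₁ s)) - (Z t s) (f (z₂ s))‖ ≤ (N * L * C) * Real.exp (-ω * (t - s)) := by
      filter_upwards [ae_restrict_mem measurableSet_Iic] with s hs
      rw [← map_sub]
      calc ‖(Z t s) (f (z₁ s) - f (z₂ s))‖ ≤ ‖Z t s‖ * ‖f (z₁ s) - f (z₂ s)‖ :=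
            (Z t s).le_opNorm _
        _ ≤ (N * Real.exp (-ω * (t - s))) * (L * C) := by
            apply mul_le_mul (hZ t s hs) ?_ (norm_nonneg _) (by positivity)
            calc ‖f (z₁ s) - f (z₂ s)‖ ≤ L * ‖z₁ s - z₂ s‖ := by
                  have h2 := hf.dist_le_mul (z₁ s) (z₂ s)
                  rw [dist_eq_norm, dist_eq_norm, hLnn] at h2
                  exact h2
              _ ≤ L * C := by
                  have := hdiff s
                  gcongr
        _ = (N * L * C) * Real.exp (-ω * (t - s)) := by ring
    have hint : Integrable (fun s => (N * L * C) * Real.exp (-ω * (t - s)))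
        (volume.restrict (Set.Iic t)) := (integrableOn_exp_decay ω t hω).const_mul _
    calc ‖∫ s in Set.Iic t, ((Z t s) (f (z₁ s)) - (Z t s) (f (z₂ s)))‖
        ≤ ∫ s in Set.Iic t, (N * L * C) * Real.exp (-ω * (t - s)) :=
          norm_integral_le_of_norm_le hint hbnd
      _ = (N * L * C) * ∫ s in Set.Iic t, Real.exp (-ω * (t - s)) := integral_const_mul _ _
      _ = N * L * C * (1 / ω) := by rw [integral_exp_decay ω t hω]
  -- Sum part
  obtain ⟨A, hA, hAle⟩ := hasSum_impulse ω t (N * L * C * Real.exp ω) hω (by positivity)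
  have keyS : ‖S₁ - S₂‖ ≤ A := by
    rw [hS₁, hS₂, ← Summable.tsum_sub (hsum₁ t) (hsum₂ t)]
    apply tsum_of_norm_bounded hA
    intro i
    by_cases h : ζ i < t
    · have hit : ((i : ℤ) : ℝ) < t := lt_of_le_of_lt (hζ i).1 h
      simp only [if_pos h, if_pos hit]
      rw [← map_sub]
      have hexp : Real.exp (-ω * (t - ζ i)) ≤ Real.exp ω * Real.exp (-ω * (t - (i : ℝ))) := by
        rw [← Real.exp_add]
        apply Real.exp_le_exp.2
        have h2 := (hζ i).2
        nlinarith
      calc ‖(Z t (ζ i)) (W (z₁ (ζ i)) - W (z₂ (ζ i)))‖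
          ≤ ‖Z t (ζ i)‖ * ‖W (z₁ (ζ i)) - W (z₂ (ζ i))‖ := (Z t (ζ i)).le_opNorm _
        _ ≤ (N * Real.exp (-ω * (t - ζ i))) * (L * C) := by
            apply mul_le_mul (hZ t (ζ i) h.le) ?_ (norm_nonneg _) (by positivity)
            calc ‖W (z₁ (ζ i)) - W (z₂ (ζ i))‖ ≤ L * ‖z₁ (ζ i) - z₂ (ζ i)‖ := by
                  have h2 := hW.dist_le_mul (z₁ (ζ i)) (z₂ (ζ i))
                  rw [dist_eq_norm, dist_eq_norm, hLnn] at h2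
                  exact h2
              _ ≤ L * C := by
                  have := hdiff (ζ i)
                  gcongr
        _ ≤ (N * (Real.exp ω * Real.exp (-ω * (t - (i : ℝ))))) * (L * C) := by
            have hNpos : (0:ℝ) ≤ N := hN.le
            gcongr
        _ = N * L * C * Real.exp ω * Real.exp (-ω * (t - (i : ℝ))) := by ring
    · simp only [if_neg h, sub_self, norm_zero]
      split
      · positivity
      · exact le_rfl
  calc ‖I₁ + S₁ - (I₂ + S₂)‖ = ‖(I₁ - I₂) + (S₁ - S₂)‖ := by rw [show I₁ + S₁ - (I₂ + S₂) = (I₁ - I₂) + (S₁ - S₂) by abel]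
    _ ≤ ‖I₁ - I₂‖ + ‖S₁ - S₂‖ := norm_add_le _ _
    _ ≤ N * L * C * (1 / ω) + A := add_le_add keyI keyS
    _ ≤ N * L * C * (1 / ω) + N * L * C * Real.exp ω / (1 - Real.exp (-ω)) := by
        exact add_le_add le_rfl hAle
    _ = N * L * (1 / ω + exp ω / (1 - exp (-ω))) * C := by ring
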